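/- Let k be a field, let r, p, q be natural numbers with p + q ≤ r, and let V be a k-vector space with basis s_0,…,s_r. Let a_p,…,a_r and b_0,…,b_{r−q} be scalars in k such that the vectors v_1 = Σ_{i=p}^{r} a_i·s_i and v_2 = Σ_{i=0}^{r−q} b_i·s_i are both nonzero. Set W_1 = span(s_0,…,s_{p−1}, v_1) and W_2 = span(v_2, s_{r−q+1},…,s_r). Then W_1 ∩ W_2 ≠ 0 if and only if a_j·b_ℓ = a_ℓ·b_j for all j, ℓ with p ≤ j, ℓ ≤ r−q. -/

import Mathlib

lemma my_repr_sum_apply {k V : Type*} [Field k] [AddCommGroup V] [Module k V] {n : ℕ}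
    (s : Module.Basis (Fin n) k V) (F : Finset (Fin n)) (f : Fin n → k) (j : Fin n) :
    s.repr (∑ i ∈ F, f i • s i) j = if j ∈ F then f j else 0 := by
  rw [map_sum, Finsupp.finset_sum_apply]
  simp only [map_smul, Module.Basis.repr_self, Finsupp.smul_apply, Finsupp.single_apply, smul_eq_mul,
    mul_ite, mul_one, mul_zero]
  rw [Finset.sum_ite_eq' F j f]

lemma my_mem_span_union {k V : Type*} [Field k] [AddCommGroup V] [Module k V] {n : ℕ}
    (s : Module.Basis (Fin n) k V) (S : Set (Fin n)) (v x : V) :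
    x ∈ Submodule.span k (s '' S ∪ {v}) ↔
      ∃ c : k, ∀ i ∉ S, s.repr x i = c * s.repr v i := by
  rw [Submodule.span_union, Submodule.mem_sup]
  constructor
  · rintro ⟨y, hy, z, hz, rfl⟩
    rw [Submodule.mem_span_singleton] at hz
    obtain ⟨c, rfl⟩ := hz
    refine ⟨c, fun i hi => ?_⟩
    rw [Module.Basis.mem_span_image] at hy
    have hy0 : s.repr y i = 0 := by
      by_contra h
      exact hi (hy (Finsupp.mem_support_iff.2 h))
    simp [hy0]
  · rintro ⟨c, hc⟩
    refine ⟨x - c • v, ?_, c • v, Submodule.smul_mem _ _ (Submodule.mem_span_singleton_self v),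
      by abel⟩
    rw [Module.Basis.mem_span_image]
    intro i hi
    rw [Finset.mem_coe, Finsupp.mem_support_iff] at hi
    by_contra hiS
    apply hi
    simp [hc i hiS]

/-- With `s_0, …, s_r` a basis of `V`, `v₁ = Σ_{i=p}^{r} a_i s_i` and
`v₂ = Σ_{i=0}^{r−q} b_i s_i` nonzero, `W₁ = span(s_0,…,s_{p−1}, v₁)` and
`W₂ = span(v₂, s_{r−q+1},…,s_r)`, we have `W₁ ∩ W₂ ≠ 0` if and only if
`a_j b_ℓ = a_ℓ b_j` for all `p ≤ j, ℓ ≤ r − q`. -/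
theorem nontrivial_intersection_iff_minors_vanish (k V : Type*) [Field k] [AddCommGroup V]
    [Module k V] (r p q : ℕ) (hpq : p + q ≤ r)
    (s : Module.Basis (Fin (r + 1)) k V)
    (a b : Fin (r + 1) → k) (v₁ v₂ : V)
    (hv₁ : v₁ = ∑ i ∈ Finset.univ.filter (fun i : Fin (r + 1) => p ≤ (i : ℕ)), a i • s i)
    (hv₂ : v₂ = ∑ i ∈ Finset.univ.filter (fun i : Fin (r + 1) => (i : ℕ) ≤ r - q), b i • s i)
    (h₁ : v₁ ≠ 0) (h₂ : v₂ ≠ 0)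
    (W₁ W₂ : Submodule k V)
    (hW₁ : W₁ = Submodule.span k ({x | ∃ i : Fin (r + 1), (i : ℕ) < p ∧ x = s i} ∪ {v₁}))
    (hW₂ : W₂ = Submodule.span k
      ({v₂} ∪ {x | ∃ i : Fin (r + 1), r - q + 1 ≤ (i : ℕ) ∧ x = s i})) :
    W₁ ⊓ W₂ ≠ ⊥ ↔
      ∀ j l : Fin (r + 1), p ≤ (j : ℕ) → (j : ℕ) ≤ r - q →
        p ≤ (l : ℕ) → (l : ℕ) ≤ r - q → a j * b l = a l * b j := by
  have hple : p ≤ r - q := Nat.le_sub_of_add_le hpq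
  have hr1 : ∀ j : Fin (r + 1), s.repr v₁ j = if p ≤ (j : ℕ) then a j else 0 := by
    intro j
    rw [hv₁, my_repr_sum_apply]
    simp [Finset.mem_filter]
  have hr2 : ∀ j : Fin (r + 1), s.repr v₂ j = if (j : ℕ) ≤ r - q then b j else 0 := by
    intro j
    rw [hv₂, my_repr_sum_apply]
    simp [Finset.mem_filter]
  have hzero : ∀ x : V, (∀ i, s.repr x i = 0) → x = 0 := by
    intro x h
    have hx : s.repr x = 0 := Finsupp.ext h
    exact s.repr.map_eq_zero_iff.1 hx
  have hm1 : ∀ x : V, x ∈ W₁ ↔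
      ∃ c : k, ∀ i : Fin (r + 1), p ≤ (i : ℕ) → s.repr x i = c * a i := by
    intro x
    have hset : {x | ∃ i : Fin (r + 1), (i : ℕ) < p ∧ x = s i}
        = s '' {i : Fin (r + 1) | (i : ℕ) < p} := by
      ext y
      constructor
      · rintro ⟨i, h1, h2⟩; exact ⟨i, h1, h2.symm⟩
      · rintro ⟨i, h1, h2⟩; exact ⟨i, h1, h2.symm⟩
    rw [hW₁, hset, my_mem_span_union]
    refine exists_congr fun c => ?_
    constructor
    · intro h i hi
      have h' := h i (by simp [Nat.not_lt.2 hi])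
      rwa [hr1, if_pos hi] at h'
    · intro h i hi
      have hpi : p ≤ (i : ℕ) := Nat.not_lt.1 (by simpa using hi)
      rw [hr1, if_pos hpi]
      exact h i hpi
  have hm2 : ∀ x : V, x ∈ W₂ ↔
      ∃ d : k, ∀ i : Fin (r + 1), (i : ℕ) ≤ r - q → s.repr x i = d * b i := by
    intro x
    have hset : {x | ∃ i : Fin (r + 1), r - q + 1 ≤ (i : ℕ) ∧ x = s i}
        = s '' {i : Fin (r + 1) | r - q + 1 ≤ (i : ℕ)} := by
      ext y
      constructor
      · rintro ⟨i, h1, h2⟩; exact ⟨i, h1, h2.symm⟩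
      · rintro ⟨i, h1, h2⟩; exact ⟨i, h1, h2.symm⟩
    rw [hW₂, Set.union_comm, hset, my_mem_span_union]
    refine exists_congr fun d => ?_
    constructor
    · intro h i hi
      have h' := h i (by simp [Nat.lt_succ_of_le hi, Nat.not_le.2 (Nat.lt_succ_of_le hi), hi])
      rwa [hr2, if_pos hi] at h'
    · intro h i hi
      have hiq : (i : ℕ) ≤ r - q := Nat.lt_succ_iff.1 (Nat.not_le.1 (by simpa using hi))
      rw [hr2, if_pos hiq]
      exact h i hiq
  constructor
  · intro hne j l hpj hjq hpl hlq
    rw [Submodule.ne_bot_iff] at hne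
    obtain ⟨x, hx, hx0⟩ := hne
    obtain ⟨hx1, hx2⟩ := Submodule.mem_inf.1 hx
    obtain ⟨c, hc⟩ := (hm1 x).1 hx1
    obtain ⟨d, hd⟩ := (hm2 x).1 hx2
    by_cases hcz : c = 0
    · by_cases hdz : d = 0
      · exfalso
        apply hx0
        apply hzero
        intro i
        by_cases hip : p ≤ (i : ℕ)
        · rw [hc i hip, hcz, zero_mul]
        · have hiq : (i : ℕ) ≤ r - q := le_trans (Nat.not_le.1 hip).le hple
          rw [hd i hiq, hdz, zero_mul]
      · have hb : ∀ i : Fin (r + 1), p ≤ (i : ℕ) → (i : ℕ) ≤ r - q → b i = 0 := by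
          intro i h1 h2
          have e : (0 : k) = d * b i := by
            rw [← hd i h2, hc i h1, hcz, zero_mul]
          exact (mul_eq_zero.1 e.symm).resolve_left hdz
        rw [hb j hpj hjq, hb l hpl hlq]; ring
    · by_cases hdz : d = 0
      · have ha : ∀ i : Fin (r + 1), p ≤ (i : ℕ) → (i : ℕ) ≤ r - q → a i = 0 := by
          intro i h1 h2
          have e : c * a i = 0 := by
            rw [← hc i h1, hd i h2, hdz, zero_mul]
          exact (mul_eq_zero.1 e).resolve_left hcz
        rw [ha j hpj hjq, ha l hpl hlq]; ring
      · have e1 : c * a j = d * b j := by rw [← hc j hpj, hd j hjq]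
        have e2 : c * a l = d * b l := by rw [← hc l hpl, hd l hlq]
        have key : (c * d) * (a j * b l) = (c * d) * (a l * b j) := by
          calc (c * d) * (a j * b l) = (c * a j) * (d * b l) := by ring
            _ = (d * b j) * (c * a l) := by rw [e1, e2]
            _ = (c * d) * (a l * b j) := by ring
        exact mul_left_cancel₀ (mul_ne_zero hcz hdz) key
  · intro hmin
    rw [Submodule.ne_bot_iff]
    by_cases hA : ∀ i : Fin (r + 1), p ≤ (i : ℕ) → (i : ℕ) ≤ r - q → a i = 0
    · refine ⟨v₁, Submodule.mem_inf.2 ⟨?_, ?_⟩, h₁⟩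
      · exact (hm1 v₁).2 ⟨1, fun i hi => by rw [hr1, if_pos hi, one_mul]⟩
      · refine (hm2 v₁).2 ⟨0, fun i hi => ?_⟩
        rw [hr1, zero_mul]
        by_cases hip : p ≤ (i : ℕ)
        · rw [if_pos hip]; exact hA i hip hi
        · rw [if_neg hip]
    · push_neg at hA
      obtain ⟨j₀, hpj₀, hj₀q, haj₀⟩ := hA
      set u : V := ∑ i : Fin (r + 1),
        (if (i : ℕ) ≤ r - q then a j₀ * b i else b j₀ * a i) • s i with hu
      have hru : ∀ i : Fin (r + 1),
          s.repr u i = if (i : ℕ) ≤ r - q then a j₀ * b i else b j₀ * a i := by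
        intro i
        rw [hu, my_repr_sum_apply]
        simp
      have hv₂0 : ∃ i : Fin (r + 1), (i : ℕ) ≤ r - q ∧ b i ≠ 0 := by
        by_contra h
        push_neg at h
        apply h₂
        apply hzero
        intro i
        rw [hr2]
        split_ifs with hh
        · exact h i hh
        · rfl
      obtain ⟨i₀, hi₀, hbi₀⟩ := hv₂0
      refine ⟨u, Submodule.mem_inf.2 ⟨?_, ?_⟩, ?_⟩
      · refine (hm1 u).2 ⟨b j₀, fun i hi => ?_⟩
        rw [hru]
        split_ifs with hh
        · rw [hmin j₀ i hpj₀ hj₀q hi hh]; ring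
        · rfl
      · refine (hm2 u).2 ⟨a j₀, fun i hi => ?_⟩
        rw [hru, if_pos hi]
      · intro h0
        apply hbi₀
        have h := hru i₀
        rw [h0, if_pos hi₀] at h
        simp only [map_zero, Finsupp.coe_zero, Pi.zero_apply] at h
        exact (mul_eq_zero.1 h.symm).resolve_left haj₀
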